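/- arXiv:0709.3835 — 2 statements merged into one kernel-verified Lean document; each statement's English description precedes it below -/
import Mathlib

section
/- Variant of Chernoff's bound: let X be a finite set, P a probability distribution on X, and let x = (x₁,…,x_n) be drawn according to the n-fold product distribution P^n. Then for any δ > 0, the probability that ‖λ_x − P‖₁ > δ is at most 2^{−n(δ²/(2 ln 2) − |X|·log₂(n+1)/n)}, where λ_x is the empirical distribution of x, i.e., λ_x(a) = |{i : x_i = a}|/n. -/
open scoped BigOperators ComplexOrder
open Matrix MeasureTheory

noncomputable section

/-- A quantum state: a positive semidefinite complex matrix of unit trace. -/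
def IsState {n : Type} [Fintype n] (M : Matrix n n ℂ) : Prop :=
  M.PosSemidef ∧ M.trace = 1

/-- Kronecker product of rectangular complex matrices. -/
def kron {I J K L : Type} (A : Matrix I J ℂ) (B : Matrix K L ℂ) :
    Matrix (I × K) (J × L) ℂ :=
  Matrix.of fun p q => A p.1 q.1 * B p.2 q.2

/-- The projector onto the maximally entangled vector `(1/√D) ∑ᵢ |i,i⟩`. -/
def phiD (D : ℕ) : Matrix (Fin D × Fin D) (Fin D × Fin D) ℂ :=
  Matrix.of fun p q => if p.1 = p.2 ∧ q.1 = q.2 then (1 / (D : ℂ)) else 0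

/-- Single-copy undistillability (trace form):
`tr[(A ⊗ B) ω (A ⊗ B)† (φ₂ − I₄/2)] ≤ 0` for all 2 × m matrices A, B. -/
def SingleCopyUndistillable {I : Type} [Fintype I] [DecidableEq I]
    (ω : Matrix (I × I) (I × I) ℂ) : Prop :=
  ∀ A B : Matrix (Fin 2) I ℂ,
    (Matrix.trace (kron A B * ω * (kron A B)ᴴ * (phiD 2 - (1 / 2 : ℂ) • 1))).re ≤ 0

/-- The SLOCC `D`-dimensional singlet fraction. -/
def singletFraction (D : ℕ) {I : Type} [Fintype I] [DecidableEq I]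
    (ω : Matrix (I × I) (I × I) ℂ) : ℝ :=
  sSup {r : ℝ | ∃ A B : Matrix (Fin D) I ℂ,
    Matrix.trace (kron A B * ω * (kron A B)ᴴ) ≠ 0 ∧
    r = (Matrix.trace (kron A B * ω * (kron A B)ᴴ * phiD D)).re /
        (Matrix.trace (kron A B * ω * (kron A B)ᴴ)).re}

/-- Single-copy undistillability, singlet-fraction form: `F₂(ω) = 1/2`. -/
def SingleCopyUndistillableF {I : Type} [Fintype I] [DecidableEq I]
    (ω : Matrix (I × I) (I × I) ℂ) : Prop :=
  singletFraction 2 ω = 1 / 2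

/-- `n`-fold tensor power of a bipartite state, with all A-factors grouped on one
side and all B-factors on the other. -/
def tensorPow {ι : Type} [Fintype ι] (ρ : Matrix (ι × ι) (ι × ι) ℂ) (n : ℕ) :
    Matrix ((Fin n → ι) × (Fin n → ι)) ((Fin n → ι) × (Fin n → ι)) ℂ :=
  Matrix.of fun x y => ∏ i : Fin n, ρ (x.1 i, x.2 i) (y.1 i, y.2 i)

/-- Permutation symmetry of a state on `ℋ^{⊗k}`: `P_π ω P_π = ω` for every `π ∈ S_k`,
expressed entrywise. -/
def PermSymmetric {ι : Type} {k : ℕ}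
    (ω : Matrix ((Fin k → ι) × (Fin k → ι)) ((Fin k → ι) × (Fin k → ι)) ℂ) : Prop :=
  ∀ (π : Equiv.Perm (Fin k)) x y,
    ω (x.1 ∘ π, x.2 ∘ π) (y.1 ∘ π, y.2 ∘ π) = ω x y

def fillAt {ι : Type} {k : ℕ} (m : Fin k) (a : ι)
    (r : {i : Fin k // i ≠ m} → ι) : Fin k → ι :=
  fun i => if h : i = m then a else r ⟨i, h⟩

/-- Partial trace over all bipartite factors except the `m`-th one. -/
def reduceAt {ι : Type} [Fintype ι] {k : ℕ} (m : Fin k)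
    (ω : Matrix ((Fin k → ι) × (Fin k → ι)) ((Fin k → ι) × (Fin k → ι)) ℂ) :
    Matrix (ι × ι) (ι × ι) ℂ :=
  Matrix.of fun p q =>
    ∑ rA : {i : Fin k // i ≠ m} → ι, ∑ rB : {i : Fin k // i ≠ m} → ι,
      ω (fillAt m p.1 rA, fillAt m p.2 rB) (fillAt m q.1 rA, fillAt m q.2 rB)

/-- Copy-correlated `k`-undistillability (trace form of single-copy undistillability):
there is a permutation-symmetric single-copy-undistillable extension on `ℋ^{⊗k}`
whose reduction to the first bipartite factor is `ρ`. -/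
def CopyCorrKUndistillable (ι : Type) [Fintype ι] [DecidableEq ι] (k : ℕ) (hk : 0 < k)
    (ρ : Matrix (ι × ι) (ι × ι) ℂ) : Prop :=
  ∃ ω : Matrix ((Fin k → ι) × (Fin k → ι)) ((Fin k → ι) × (Fin k → ι)) ℂ,
    IsState ω ∧ PermSymmetric ω ∧ SingleCopyUndistillable ω ∧
      reduceAt (⟨0, hk⟩ : Fin k) ω = ρ

/-- Copy-correlated `k`-undistillability (singlet-fraction form). -/
def CopyCorrKUndistillableF (ι : Type) [Fintype ι] [DecidableEq ι] (k : ℕ) (hk : 0 < k)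
    (ρ : Matrix (ι × ι) (ι × ι) ℂ) : Prop :=
  ∃ ω : Matrix ((Fin k → ι) × (Fin k → ι)) ((Fin k → ι) × (Fin k → ι)) ℂ,
    IsState ω ∧ PermSymmetric ω ∧ SingleCopyUndistillableF ω ∧
      reduceAt (⟨0, hk⟩ : Fin k) ω = ρ

/-- Dual cone of a set of matrices, inside the Hermitian matrices. -/
def dualCone {n : Type} [Fintype n] (M : Set (Matrix n n ℂ)) : Set (Matrix n n ℂ) :=
  {X | X.IsHermitian ∧ ∀ ρ ∈ M, 0 ≤ (Matrix.trace (X * ρ)).re}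

/-- Separability: membership in the closed convex hull of the product states. -/
def SeparableState {ι : Type} [Fintype ι] (σ : Matrix (ι × ι) (ι × ι) ℂ) : Prop :=
  σ ∈ closure (convexHull ℝ
    {M : Matrix (ι × ι) (ι × ι) ℂ | ∃ α β : Matrix ι ι ℂ,
      IsState α ∧ IsState β ∧ M = kron α β})

/-- Trace norm `‖X‖₁ = tr √(X†X)`. -/
def traceNorm {n : Type} [Fintype n] [DecidableEq n] (X : Matrix n n ℂ) : ℝ :=
  (((Matrix.posSemidef_conjTranspose_mul_self X).1.eigenvectorUnitary : Matrix n n ℂ) *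
    Matrix.diagonal (fun i => ((Real.sqrt ∘ (Matrix.posSemidef_conjTranspose_mul_self X).1.eigenvalues) i : ℂ)) *
    (star (Matrix.posSemidef_conjTranspose_mul_self X).1.eigenvectorUnitary : Matrix n n ℂ)).trace.re

/-- Symmetrization `Ŝ_k(Q) = (1/k!) ∑_{π ∈ S_k} P_π Q P_π`. -/
def symmetrize {ι : Type} {k : ℕ}
    (Q : Matrix ((Fin k → ι) × (Fin k → ι)) ((Fin k → ι) × (Fin k → ι)) ℂ) :
    Matrix ((Fin k → ι) × (Fin k → ι)) ((Fin k → ι) × (Fin k → ι)) ℂ :=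
  (1 / (Nat.factorial k : ℂ)) •
    ∑ π : Equiv.Perm (Fin k),
      Matrix.of fun x y => Q (x.1 ∘ π, x.2 ∘ π) (y.1 ∘ π, y.2 ∘ π)


instance matMeasurableSpace {m n : Type} [Fintype m] [Fintype n] :
    MeasurableSpace (Matrix m n ℂ) := borel _

/-- Partial trace over the last `n − k` bipartite factors. -/
def traceTail {ι : Type} [Fintype ι] {n k : ℕ} (h : k ≤ n)
    (ω : Matrix ((Fin n → ι) × (Fin n → ι)) ((Fin n → ι) × (Fin n → ι)) ℂ) :
    Matrix ((Fin k → ι) × (Fin k → ι)) ((Fin k → ι) × (Fin k → ι)) ℂ :=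
  Matrix.of fun x y =>
    ∑ tA : Fin (n - k) → ι, ∑ tB : Fin (n - k) → ι,
      ω (fun i => Fin.append x.1 tA (Fin.cast (by omega) i),
         fun i => Fin.append x.2 tB (Fin.cast (by omega) i))
        (fun i => Fin.append y.1 tA (Fin.cast (by omega) i),
         fun i => Fin.append y.2 tB (Fin.cast (by omega) i))

/-- Partial trace over the last bipartite factor. -/
def traceLast {ι : Type} [Fintype ι] {k : ℕ}
    (ω : Matrix ((Fin (k + 1) → ι) × (Fin (k + 1) → ι))
      ((Fin (k + 1) → ι) × (Fin (k + 1) → ι)) ℂ) :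
    Matrix ((Fin k → ι) × (Fin k → ι)) ((Fin k → ι) × (Fin k → ι)) ℂ :=
  Matrix.of fun x y => ∑ a : ι, ∑ b : ι,
    ω (Fin.snoc x.1 a, Fin.snoc x.2 b) (Fin.snoc y.1 a, Fin.snoc y.2 b)

/-- `X ⊗ I^{⊗(k−1)}`: the operator acting as `X` on the first bipartite factor
and as the identity on the remaining `k − 1` factors. -/
def firstFactorOp {ι : Type} [DecidableEq ι] (k : ℕ) (hk : 0 < k)
    (X : Matrix (ι × ι) (ι × ι) ℂ) :
    Matrix ((Fin k → ι) × (Fin k → ι)) ((Fin k → ι) × (Fin k → ι)) ℂ :=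
  Matrix.of fun x y =>
    X (x.1 ⟨0, hk⟩, x.2 ⟨0, hk⟩) (y.1 ⟨0, hk⟩, y.2 ⟨0, hk⟩) *
      ∏ i : Fin k, if i = ⟨0, hk⟩ then 1
        else (if x.1 i = y.1 i ∧ x.2 i = y.2 i then 1 else 0)

/-- `⟨φ| ⊗ I₂` with `|φ⟩ = ∑ᵢ |i,i⟩` the unnormalized maximally entangled vector. -/
def jamA (d : ℕ) : Matrix (Fin 2) ((Fin d × Fin d) × Fin 2) ℂ :=
  Matrix.of fun s p => (if p.1.1 = p.1.2 then (1 : ℂ) else 0) * (if s = p.2 then 1 else 0)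

/-- `σ ⊗ ρ` with tensor factors ordered as `((A₂A₁A₃), (B₂B₁B₃))`. -/
def jamState (d : ℕ) (σ : Matrix (Fin d × Fin d) (Fin d × Fin d) ℂ)
    (ρ : Matrix ((Fin d × Fin 2) × (Fin d × Fin 2))
      ((Fin d × Fin 2) × (Fin d × Fin 2)) ℂ) :
    Matrix (((Fin d × Fin d) × Fin 2) × ((Fin d × Fin d) × Fin 2))
      (((Fin d × Fin d) × Fin 2) × ((Fin d × Fin d) × Fin 2)) ℂ :=
  Matrix.of fun x y =>
    σ (x.1.1.1, x.2.1.1) (y.1.1.1, y.2.1.1) *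
      ρ ((x.1.1.2, x.1.2), (x.2.1.2, x.2.2)) ((y.1.1.2, y.1.2), (y.2.1.2, y.2.2))

/-- Joint operator `ρ ⊗ σ`, regrouped as a bipartite operator across the cut
joining both A-parts against both B-parts. -/
def jointState {ι κ : Type} (ρ : Matrix (ι × ι) (ι × ι) ℂ)
    (σ : Matrix (κ × κ) (κ × κ) ℂ) :
    Matrix ((ι × κ) × (ι × κ)) ((ι × κ) × (ι × κ)) ℂ :=
  Matrix.of fun x y =>
    ρ (x.1.1, x.2.1) (y.1.1, y.2.1) * σ (x.1.2, x.2.2) (y.1.2, y.2.2)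

namespace ChernoffAux

open Real Finset

/-- derivative part -/
noncomputable def gfun (t : ℝ) : ℝ := Real.log t - 3*(t-1)*(t+5)/(2*(t+2)^2)

noncomputable def hfun (t : ℝ) : ℝ := t * Real.log t - t + 1 - 3*(t-1)^2/(2*(t+2))

lemma hasDerivAt_gfun {t : ℝ} (ht : 0 < t) :
    HasDerivAt gfun (1/t - 27/(t+2)^3) t := by
  have h2 : (2*(t+2)^2) ≠ 0 := by positivity
  have hd : HasDerivAt (fun t : ℝ => 3*(t-1)*(t+5)/(2*(t+2)^2))
      (27/(t+2)^3) t := by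
    have hn : HasDerivAt (fun t : ℝ => 3*(t-1)*(t+5)) (3*(2*t+4)) t := by
      have : HasDerivAt (fun t : ℝ => 3*(t-1)*(t+5)) ((3*1)*(t+5) + 3*(t-1)*1) t := by
        exact (((hasDerivAt_id t).sub_const 1).const_mul 3).mul
          ((hasDerivAt_id t).add_const 5)
      convert this using 1; ring
    have hden : HasDerivAt (fun t : ℝ => 2*(t+2)^2) (2*(2*(t+2))) t := by
      have := (((hasDerivAt_id t).add_const 2).pow 2).const_mul 2
      refine this.congr_deriv ?_; simp
    have := hn.div hden h2
    refine this.congr_deriv ?_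
    field_simp
    ring
  have hl : HasDerivAt Real.log (1/t) t := by
    simpa [one_div] using Real.hasDerivAt_log (ne_of_gt ht)
  exact hl.sub hd

lemma hasDerivAt_hfun {t : ℝ} (ht : 0 < t) : HasDerivAt hfun (gfun t) t := by
  have h1 : HasDerivAt (fun t : ℝ => t * Real.log t) (Real.log t + 1) t :=
    Real.hasDerivAt_mul_log (ne_of_gt ht)
  have h2 : (2*(t+2)) ≠ 0 := by positivity
  have h3 : HasDerivAt (fun t : ℝ => 3*(t-1)^2/(2*(t+2)))
      (3*(t-1)*(t+5)/(2*(t+2)^2)) t := by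
    have hn : HasDerivAt (fun t : ℝ => 3*(t-1)^2) (3*(2*(t-1))) t := by
      have := (((hasDerivAt_id t).sub_const 1).pow 2).const_mul 3
      refine this.congr_deriv ?_; simp
    have hden : HasDerivAt (fun t : ℝ => 2*(t+2)) 2 t := by
      simpa using ((hasDerivAt_id t).add_const 2).const_mul 2
    have := hn.div hden h2
    refine this.congr_deriv ?_
    field_simp
    ring
  have := ((h1.sub (hasDerivAt_id t)).add_const 1).sub h3
  refine this.congr_deriv ?_
  unfold gfun
  ring

lemma gfun_mono : MonotoneOn gfun (Set.Ioi 0) := by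
  have hi : interior (Set.Ioi (0:ℝ)) = Set.Ioi 0 := interior_Ioi
  apply monotoneOn_of_deriv_nonneg (convex_Ioi 0)
  · intro t ht
    exact (hasDerivAt_gfun ht).continuousAt.continuousWithinAt
  · rw [hi]; intro t ht; exact (hasDerivAt_gfun ht).differentiableAt.differentiableWithinAt
  · rw [hi]; intro t ht
    rw [(hasDerivAt_gfun ht).deriv]
    rw [Set.mem_Ioi] at ht
    rw [sub_nonneg, div_le_div_iff₀ (by positivity) ht]
    nlinarith [sq_nonneg (t-1), sq_nonneg t, mul_pos ht ht]

lemma gfun_one : gfun 1 = 0 := by simp [gfun]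
lemma hfun_one : hfun 1 = 0 := by simp [hfun]

lemma hfun_nonneg {t : ℝ} (ht : 0 ≤ t) : 0 ≤ hfun t := by
  rcases le_or_gt t 1 with h1 | h1
  · -- antitone on [0,1]
    have hanti : AntitoneOn hfun (Set.Icc 0 1) := by
      apply antitoneOn_of_deriv_nonpos (convex_Icc 0 1)
      · -- continuity on Icc 0 1, including 0
        have : ContinuousOn (fun t : ℝ => t * Real.log t - t + 1 - 3*(t-1)^2/(2*(t+2)))
            (Set.Icc 0 1) := by
          apply ContinuousOn.sub
          · exact (((Real.continuous_mul_log.continuousOn).sub continuousOn_id).add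
              continuousOn_const)
          · apply ContinuousOn.div
            · fun_prop
            · fun_prop
            · intro x hx; have := hx.1; positivity
        exact this
      · rw [interior_Icc]; intro x hx
        exact (hasDerivAt_hfun hx.1).differentiableAt.differentiableWithinAt
      · rw [interior_Icc]; intro x hx
        rw [(hasDerivAt_hfun hx.1).deriv]
        have := gfun_mono (Set.mem_Ioi.mpr hx.1) (Set.mem_Ioi.mpr one_pos) (le_of_lt hx.2)
        rwa [gfun_one] at this
    have := hanti (Set.mem_Icc.mpr ⟨ht, h1⟩) (Set.mem_Icc.mpr ⟨zero_le_one, le_refl 1⟩) h1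
    rwa [hfun_one] at this
  · have hmono : MonotoneOn hfun (Set.Ici 1) := by
      apply monotoneOn_of_deriv_nonneg (convex_Ici 1)
      · intro x hx
        exact (hasDerivAt_hfun (lt_of_lt_of_le one_pos hx)).continuousAt.continuousWithinAt
      · rw [interior_Ici]; intro x hx
        exact (hasDerivAt_hfun (lt_trans one_pos hx)).differentiableAt.differentiableWithinAt
      · rw [interior_Ici]; intro x hx
        rw [(hasDerivAt_hfun (lt_trans one_pos hx)).deriv]
        have := gfun_mono (Set.mem_Ioi.mpr one_pos) (Set.mem_Ioi.mpr (lt_trans one_pos hx))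
          (le_of_lt hx)
        rwa [gfun_one] at this
    have := hmono (Set.mem_Ici.mpr (le_refl 1)) (Set.mem_Ici.mpr h1.le) h1.le
    rwa [hfun_one] at this

/-- Pointwise refined Pinsker inequality. -/
lemma pointwise_pinsker {x y : ℝ} (hx : 0 ≤ x) (hy : 0 < y) :
    3*(x-y)^2/(2*(x+2*y)) ≤ x * Real.log (x/y) - x + y := by
  have key := hfun_nonneg (t := x/y) (by positivity)
  unfold hfun at key
  have h1 : (0:ℝ) < x/y + 2 := by positivity
  rw [sub_nonneg, div_le_iff₀ (by positivity)] at key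
  have h2 : x * Real.log (x/y) - x + y = y * ((x/y) * Real.log (x/y) - (x/y) + 1) := by
    field_simp
  rw [h2]
  rw [div_le_iff₀ (by positivity)]
  set u := x / y with hu
  have hxu : x = u * y := by rw [hu]; field_simp
  have := mul_le_mul_of_nonneg_right key (sq_nonneg y)
  calc 3*(x-y)^2 = 3 * (u - 1)^2 * y^2 := by rw [hxu]; ring
    _ ≤ (u * Real.log u - u + 1) * (2*(u+2)) * y^2 := this
    _ = y * (u * Real.log u - u + 1) * (2*(x+2*y)) := by rw [hxu]; ring

lemma pinsker {X : Type*} [Fintype X] (q p : X → ℝ)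
    (hq0 : ∀ a, 0 ≤ q a) (hp0 : ∀ a, 0 ≤ p a)
    (hq1 : ∑ a, q a = 1) (hp1 : ∑ a, p a = 1)
    (habs : ∀ a, p a = 0 → q a = 0) :
    (∑ a, |q a - p a|) ^ 2 / 2 ≤ ∑ a, q a * Real.log (q a / p a) := by
  classical
  set F : Finset X := Finset.univ.filter (fun a => 0 < p a) with hF
  have hFmem : ∀ a, a ∈ F ↔ 0 < p a := by intro a; simp [hF]
  have hoff : ∀ a, a ∉ F → p a = 0 ∧ q a = 0 := by
    intro a ha
    have : ¬ 0 < p a := by simpa [hFmem] using ha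
    have hpa : p a = 0 := le_antisymm (not_lt.mp this) (hp0 a)
    exact ⟨hpa, habs a hpa⟩
  -- reduce sums to F
  have hsum1 : ∑ a, q a * Real.log (q a / p a) = ∑ a ∈ F, q a * Real.log (q a / p a) := by
    rw [← Finset.sum_subset (Finset.subset_univ F)]
    intro a _ ha
    rw [(hoff a ha).2]; ring
  have hsum2 : ∑ a, |q a - p a| = ∑ a ∈ F, |q a - p a| := by
    rw [← Finset.sum_subset (Finset.subset_univ F)]
    intro a _ ha
    rw [(hoff a ha).1, (hoff a ha).2]; simp
  have hsum3 : ∑ a ∈ F, (q a - p a) = 0 := by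
    rw [Finset.sum_subset (Finset.subset_univ F)]
    · rw [Finset.sum_sub_distrib, hq1, hp1]; ring
    · intro a _ ha
      rw [(hoff a ha).1, (hoff a ha).2]; ring
  have hW : ∑ a ∈ F, (q a + 2 * p a) ≤ 3 := by
    calc ∑ a ∈ F, (q a + 2 * p a) ≤ ∑ a, (q a + 2 * p a) := by
          apply Finset.sum_le_sum_of_subset_of_nonneg (Finset.subset_univ F)
          intro a _ _
          have := hq0 a; have := hp0 a; linarith
      _ = 3 := by rw [Finset.sum_add_distrib, hq1, ← Finset.mul_sum, hp1]; ring
  -- pointwise bound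
  have hpt : ∑ a ∈ F, (q a - p a + 3*(q a - p a)^2/(2*(q a + 2*p a)))
      ≤ ∑ a ∈ F, q a * Real.log (q a / p a) := by
    apply Finset.sum_le_sum
    intro a ha
    have := pointwise_pinsker (hq0 a) ((hFmem a).mp ha)
    linarith
  -- Cauchy-Schwarz
  have hCS : (∑ a ∈ F, |q a - p a|) ^ 2
      ≤ (∑ a ∈ F, (q a - p a)^2 / (q a + 2*p a)) * ∑ a ∈ F, (q a + 2 * p a) := by
    have key := Finset.sum_mul_sq_le_sq_mul_sq F
      (fun a => |q a - p a| / Real.sqrt (q a + 2*p a))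
      (fun a => Real.sqrt (q a + 2*p a))
    have he : ∀ a ∈ F, |q a - p a| / Real.sqrt (q a + 2*p a) * Real.sqrt (q a + 2*p a)
        = |q a - p a| := by
      intro a ha
      have hw : (0:ℝ) < q a + 2*p a := by
        have := (hFmem a).mp ha; have := hq0 a; linarith
      exact div_mul_cancel₀ _ (Real.sqrt_ne_zero'.mpr hw)
    have he2 : ∀ a ∈ F, (|q a - p a| / Real.sqrt (q a + 2*p a))^2
        = (q a - p a)^2 / (q a + 2*p a) := by
      intro a ha
      have hw : (0:ℝ) < q a + 2*p a := by
        have := (hFmem a).mp ha; have := hq0 a; linarith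
      rw [div_pow, sq_abs, Real.sq_sqrt hw.le]
    have he3 : ∀ a ∈ F, (Real.sqrt (q a + 2*p a))^2 = q a + 2*p a := by
      intro a ha
      have hw : (0:ℝ) < q a + 2*p a := by
        have := (hFmem a).mp ha; have := hq0 a; linarith
      rw [Real.sq_sqrt hw.le]
    rw [Finset.sum_congr rfl he, Finset.sum_congr rfl he2, Finset.sum_congr rfl he3] at key
    exact key
  -- combine
  rw [hsum1, hsum2]
  have hS0 : 0 ≤ ∑ a ∈ F, (q a - p a)^2 / (q a + 2*p a) := by
    apply Finset.sum_nonneg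
    intro a ha
    have hw : (0:ℝ) < q a + 2*p a := by
      have := (hFmem a).mp ha; have := hq0 a; linarith
    positivity
  have h3 : (∑ a ∈ F, |q a - p a|) ^ 2
      ≤ (∑ a ∈ F, (q a - p a)^2 / (q a + 2*p a)) * 3 :=
    hCS.trans (mul_le_mul_of_nonneg_left hW hS0)
  have h4 : ∑ a ∈ F, (q a - p a + 3*(q a - p a)^2/(2*(q a + 2*p a)))
      = (3/2) * ∑ a ∈ F, (q a - p a)^2 / (q a + 2*p a) := by
    rw [Finset.sum_add_distrib, hsum3, Finset.mul_sum]
    rw [zero_add]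
    apply Finset.sum_congr rfl
    intro a ha
    have hw : (0:ℝ) < q a + 2*p a := by
      have := (hFmem a).mp ha; have := hq0 a; linarith
    field_simp
  rw [h4] at hpt
  linarith

variable {X : Type} [Fintype X] [DecidableEq X]

/-- count of `a` in `x` -/
def cnt {n : ℕ} (x : Fin n → X) (a : X) : ℕ := (Finset.univ.filter fun i => x i = a).card

lemma sum_cnt {n : ℕ} (x : Fin n → X) : ∑ a, cnt x a = n := by
  have := Finset.card_eq_sum_card_fiberwise (f := x) (s := Finset.univ) (t := Finset.univ)
    (fun i _ => mem_univ _)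
  simpa [cnt] using this.symm

lemma prod_comp_cnt {n : ℕ} (x : Fin n → X) (f : X → ℝ) :
    ∏ i, f (x i) = ∏ a, f a ^ cnt x a := by
  have := Finset.prod_fiberwise' (Finset.univ : Finset (Fin n)) x f
  rw [← this]
  apply Finset.prod_congr rfl
  intro a _
  rw [Finset.prod_const]
  rfl

lemma stepA (P : X → ℝ) (hP0 : ∀ a, 0 ≤ P a) (hP1 : ∑ a, P a = 1)
    {n : ℕ} (hn : 0 < n) (δ : ℝ) (hδ : 0 < δ) (x : Fin n → X)
    (hx : δ < ∑ a, |(cnt x a : ℝ) / n - P a|) :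
    ∏ i, P (x i) ≤ Real.exp (-((n:ℝ) * δ^2 / 2)) * ∏ i, ((cnt x (x i) : ℝ) / n) := by
  have hnR : (0:ℝ) < n := by exact_mod_cast hn
  set q : X → ℝ := fun a => (cnt x a : ℝ) / n with hq
  have hq0 : ∀ a, 0 ≤ q a := fun a => by positivity
  have hq1 : ∑ a, q a = 1 := by
    rw [hq]
    rw [← Finset.sum_div]
    rw [show ∑ a, (cnt x a : ℝ) = (n:ℝ) by exact_mod_cast congrArg Nat.cast (sum_cnt x)]
    field_simp
  by_cases hzero : ∃ a, P a = 0 ∧ 0 < q a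
  · obtain ⟨a, hPa, hqa⟩ := hzero
    have hca : 0 < cnt x a := by
      by_contra h
      push_neg at h
      have h0 : cnt x a = 0 := Nat.le_zero.mp h
      rw [hq] at hqa
      simp only [h0, Nat.cast_zero, zero_div] at hqa
      exact lt_irrefl 0 hqa
    obtain ⟨i, hi⟩ := Finset.card_pos.mp hca
    have hxi : x i = a := (Finset.mem_filter.mp hi).2
    have hzeroP : ∏ i, P (x i) = 0 :=
      Finset.prod_eq_zero (Finset.mem_univ i) (by rw [hxi, hPa])
    rw [hzeroP]
    have : (0:ℝ) ≤ ∏ i, ((cnt x (x i) : ℝ) / n) :=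
      Finset.prod_nonneg fun i _ => by positivity
    exact mul_nonneg (Real.exp_nonneg _) this
  · have habs : ∀ a, P a = 0 → q a = 0 := by
      intro a h
      have h2 : ¬ 0 < q a := fun hlt => hzero ⟨a, h, hlt⟩
      exact le_antisymm (not_lt.mp h2) (hq0 a)
    have hpk := pinsker q P hq0 hP0 hq1 hP1 habs
    have hδ2 : δ^2 / 2 ≤ ∑ a, q a * Real.log (q a / P a) := by
      refine le_trans ?_ hpk
      have h1 : δ ≤ ∑ a, |q a - P a| := le_of_lt (by simpa [hq] using hx)
      have h2 : δ^2 ≤ (∑ a, |q a - P a|)^2 := by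
        apply sq_le_sq' <;> nlinarith [Finset.sum_nonneg (fun a (_ : a ∈ Finset.univ) => abs_nonneg (q a - P a))]
      linarith
    -- restrict to support
    set A : Finset X := Finset.univ.filter (fun a => 0 < cnt x a) with hA
    have hqA : ∀ a ∈ A, 0 < q a := by
      intro a ha
      have : 0 < cnt x a := by simpa [hA] using ha
      have : (0:ℝ) < (cnt x a : ℝ) := by exact_mod_cast this
      positivity
    have hPA : ∀ a ∈ A, 0 < P a := by
      intro a ha
      rcases lt_or_eq_of_le (hP0 a) with h | h
      · exact h
      · exact absurd (habs a h.symm) (ne_of_gt (hqA a ha))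
    have hoffA : ∀ a, a ∉ A → cnt x a = 0 := by
      intro a ha
      have : ¬ 0 < cnt x a := by simpa [hA] using ha
      omega
    have hprodP : ∏ i, P (x i) = ∏ a ∈ A, P a ^ cnt x a := by
      rw [prod_comp_cnt x P, ← Finset.prod_subset (Finset.subset_univ A)]
      intro a _ ha
      rw [hoffA a ha, pow_zero]
    have hprodq : ∏ i, ((cnt x (x i) : ℝ) / n) = ∏ a ∈ A, q a ^ cnt x a := by
      rw [prod_comp_cnt x q, ← Finset.prod_subset (Finset.subset_univ A)]
      intro a _ ha
      rw [hoffA a ha, pow_zero]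
    rw [hprodP, hprodq]
    -- exponential form
    have hexpP : ∏ a ∈ A, P a ^ cnt x a = Real.exp (∑ a ∈ A, (cnt x a : ℝ) * Real.log (P a)) := by
      rw [Real.exp_sum]
      apply Finset.prod_congr rfl
      intro a ha
      rw [Real.exp_nat_mul, Real.exp_log (hPA a ha)]
    have hexpq : ∏ a ∈ A, q a ^ cnt x a = Real.exp (∑ a ∈ A, (cnt x a : ℝ) * Real.log (q a)) := by
      rw [Real.exp_sum]
      apply Finset.prod_congr rfl
      intro a ha
      rw [Real.exp_nat_mul, Real.exp_log (hqA a ha)]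
    rw [hexpP, hexpq, ← Real.exp_add, Real.exp_le_exp]
    -- key: n * δ²/2 ≤ ∑_A c (log q − log P)
    have hkey : (n:ℝ) * (δ^2/2) ≤ ∑ a ∈ A, (cnt x a : ℝ) * (Real.log (q a) - Real.log (P a)) := by
      have hsA : ∑ a ∈ A, (cnt x a : ℝ) * (Real.log (q a) - Real.log (P a))
          = (n:ℝ) * ∑ a, q a * Real.log (q a / P a) := by
        rw [Finset.mul_sum]
        rw [← Finset.sum_subset (Finset.subset_univ A)]
        · apply Finset.sum_congr rfl
          intro a ha
          rw [Real.log_div (ne_of_gt (hqA a ha)) (ne_of_gt (hPA a ha))]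
          rw [hq]
          field_simp
        · intro a _ ha
          have hc := hoffA a ha
          have hqa : q a = 0 := by show (cnt x a : ℝ)/n = 0; rw [hc]; simp
          rw [hqa]
          simp
      rw [hsA]
      exact mul_le_mul_of_nonneg_left hδ2 hnR.le
    have hsplit : ∑ a ∈ A, (cnt x a : ℝ) * (Real.log (q a) - Real.log (P a))
        = (∑ a ∈ A, (cnt x a : ℝ) * Real.log (q a))
          - ∑ a ∈ A, (cnt x a : ℝ) * Real.log (P a) := by
      rw [← Finset.sum_sub_distrib]
      apply Finset.sum_congr rfl
      intros
      ring
    rw [hsplit] at hkey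
    linarith [hkey]


lemma stepB {n : ℕ} (hn : 0 < n) :
    ∑ x : Fin n → X, ∏ i, ((cnt x (x i) : ℝ) / n) ≤ ((n:ℝ)+1) ^ (Fintype.card X) := by
  classical
  have hnR : (0:ℝ) < n := by exact_mod_cast hn
  have hle : ∀ (x : Fin n → X) a, cnt x a ≤ n := by
    intro x a
    calc cnt x a ≤ (Finset.univ : Finset (Fin n)).card := Finset.card_filter_le _ _
      _ = n := by simp
  set T : (Fin n → X) → (X → Fin (n+1)) :=
    fun x a => ⟨cnt x a, Nat.lt_succ_of_le (hle x a)⟩ with hT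
  have hfibers := Finset.sum_fiberwise (Finset.univ : Finset (Fin n → X)) T
    (fun x => ∏ i, ((cnt x (x i) : ℝ) / n))
  rw [← hfibers]
  have hfib : ∀ t : X → Fin (n+1),
      (∑ x ∈ Finset.univ.filter (fun x => T x = t), ∏ i, ((cnt x (x i) : ℝ)/n)) ≤ 1 := by
    intro t
    by_cases hne : (Finset.univ.filter (fun x => T x = t)).Nonempty
    · obtain ⟨x₀, hx₀⟩ := hne
      have hTx₀ : T x₀ = t := (Finset.mem_filter.mp hx₀).2
      have hsumt : ∑ a, ((t a : ℕ) : ℝ) = (n : ℝ) := by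
        rw [← hTx₀]
        have : ∑ a, ((T x₀ a : ℕ)) = n := by
          simp only [hT]
          exact sum_cnt x₀
        exact_mod_cast congrArg Nat.cast this
      calc ∑ x ∈ Finset.univ.filter (fun x => T x = t), ∏ i, ((cnt x (x i) : ℝ)/n)
          = ∑ x ∈ Finset.univ.filter (fun x => T x = t), ∏ i, (((t (x i)) : ℕ) : ℝ)/n := by
            apply Finset.sum_congr rfl
            intro x hx
            have hTx : T x = t := (Finset.mem_filter.mp hx).2
            apply Finset.prod_congr rfl
            intro i _
            rw [← hTx]
        _ ≤ ∑ x : Fin n → X, ∏ i, (((t (x i)) : ℕ) : ℝ)/n := by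
            apply Finset.sum_le_sum_of_subset_of_nonneg (Finset.filter_subset _ _)
            intro x _ _
            exact Finset.prod_nonneg fun i _ => by positivity
        _ = (∑ a, ((t a : ℕ) : ℝ)/n) ^ n := (Fintype.sum_pow (fun a => ((t a : ℕ) : ℝ)/n) n).symm
        _ = 1 := by
            rw [← Finset.sum_div, hsumt]
            rw [div_self (ne_of_gt hnR)]
            exact one_pow n
    · rw [Finset.not_nonempty_iff_eq_empty] at hne
      rw [hne]
      simp
  calc ∑ t : X → Fin (n+1), ∑ x ∈ Finset.univ.filter (fun x => T x = t),
          ∏ i, ((cnt x (x i) : ℝ)/n)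
      ≤ ∑ _t : X → Fin (n+1), (1:ℝ) := Finset.sum_le_sum fun t _ => hfib t
    _ = (Fintype.card (X → Fin (n+1)) : ℝ) := by simp
    _ = ((n:ℝ)+1) ^ (Fintype.card X) := by
        rw [Fintype.card_fun]
        push_cast
        simp

end ChernoffAux

/-- **Lemma 2 (Variant of Chernoff's bound).** -/
theorem chernoff_variant (X : Type) [Fintype X] [DecidableEq X]
    (P : X → ℝ) (hP0 : ∀ a, 0 ≤ P a) (hP1 : ∑ a, P a = 1)
    (n : ℕ) (δ : ℝ) (hδ : 0 < δ) :
    ∑ x : Fin n → X,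
        Set.indicator
          {x : Fin n → X |
            δ < ∑ a : X,
              |((Finset.univ.filter fun i => x i = a).card : ℝ) / n - P a|}
          (fun x => ∏ i, P (x i)) x
      ≤ (2 : ℝ) ^ (-(n : ℝ) * (δ ^ 2 / (2 * Real.log 2)
          - (Fintype.card X : ℝ) * Real.logb 2 (n + 1) / n)) := by
  classical
  set S : Set (Fin n → X) :=
    {x : Fin n → X | δ < ∑ a : X,
      |((Finset.univ.filter fun i => x i = a).card : ℝ) / n - P a|} with hS
  have hprod_nonneg : ∀ x : Fin n → X, 0 ≤ ∏ i, P (x i) :=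
    fun x => Finset.prod_nonneg fun i _ => hP0 (x i)
  have htot : ∑ x : Fin n → X, ∏ i, P (x i) = 1 := by
    rw [← Fintype.sum_pow P n, hP1, one_pow]
  rcases Nat.eq_zero_or_pos n with hn0 | hn
  · -- n = 0 : RHS = 1 and LHS ≤ total mass 1
    subst hn0
    have hR : (2 : ℝ) ^ (-(0 : ℝ) * (δ ^ 2 / (2 * Real.log 2)
        - (Fintype.card X : ℝ) * Real.logb 2 ((0:ℕ) + 1) / (0:ℕ))) = 1 := by
      norm_num
    rw [show ((0:ℕ):ℝ) = (0:ℝ) by norm_num] at *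
    calc ∑ x : Fin 0 → X, Set.indicator S (fun x => ∏ i, P (x i)) x
        ≤ ∑ x : Fin 0 → X, ∏ i, P (x i) := by
          apply Finset.sum_le_sum
          intro x _
          exact Set.indicator_le_self' (fun y _ => hprod_nonneg y) x
      _ = 1 := htot
      _ ≤ _ := by rw [hR]
  · -- main case
    have hnR : (0:ℝ) < n := by exact_mod_cast hn
    have hlog2 : (0:ℝ) < Real.log 2 := Real.log_pos (by norm_num)
    set K : ℕ := Fintype.card X with hK
    have hRHS : (2 : ℝ) ^ (-(n : ℝ) * (δ ^ 2 / (2 * Real.log 2)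
          - (K : ℝ) * Real.logb 2 (n + 1) / n))
        = Real.exp (-((n:ℝ) * δ^2 / 2)) * ((n:ℝ)+1) ^ K := by
      rw [Real.rpow_def_of_pos (by norm_num : (0:ℝ) < 2)]
      have hE : Real.log 2 * (-(n : ℝ) * (δ ^ 2 / (2 * Real.log 2)
            - (K : ℝ) * Real.logb 2 (n + 1) / n))
          = -((n:ℝ) * δ^2 / 2) + (K : ℝ) * Real.log ((n:ℝ)+1) := by
        rw [Real.logb]
        field_simp
        ring
      rw [hE, Real.exp_add, Real.exp_nat_mul, Real.exp_log (by positivity)]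
    rw [hRHS]
    calc ∑ x : Fin n → X, Set.indicator S (fun x => ∏ i, P (x i)) x
        ≤ ∑ x : Fin n → X,
            Real.exp (-((n:ℝ) * δ^2 / 2)) * ∏ i, ((ChernoffAux.cnt x (x i) : ℝ) / n) := by
          apply Finset.sum_le_sum
          intro x _
          by_cases hxS : x ∈ S
          · rw [Set.indicator_of_mem hxS]
            exact ChernoffAux.stepA P hP0 hP1 hn δ hδ x hxS
          · rw [Set.indicator_of_notMem hxS]
            exact mul_nonneg (Real.exp_nonneg _)
              (Finset.prod_nonneg fun i _ => by positivity)
      _ = Real.exp (-((n:ℝ) * δ^2 / 2))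
            * ∑ x : Fin n → X, ∏ i, ((ChernoffAux.cnt x (x i) : ℝ) / n) := by
          rw [Finset.mul_sum]
      _ ≤ Real.exp (-((n:ℝ) * δ^2 / 2)) * (((n:ℝ)+1) ^ K) :=
          mul_le_mul_of_nonneg_left (ChernoffAux.stepB hn) (Real.exp_nonneg _)
end
end

section
/- Dual cone of a decreasing intersection of cones: let V be a finite-dimensional real inner product space and let (K_n)_{n≥1} be a sequence of closed convex cones in V with K_{n+1} ⊆ K_n for all n. Then the dual cone of ⋂_{n≥1} K_n equals the closure of ⋃_{n≥1} K_n*: (⋂_n K_n)* = cl(⋃_n K_n*). -/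
open scoped RealInnerProductSpace

/-- The inner dual cone of a set (port helper). -/
def Set.innerDualCone {E : Type*} [NormedAddCommGroup E] [InnerProductSpace ℝ E] (s : Set E) :
    ConvexCone ℝ E where
  carrier := {y | ∀ x ∈ s, 0 ≤ ⟪x, y⟫}
  smul_mem' c hc y hy x hx := by
    rw [real_inner_smul_right]
    exact mul_nonneg hc.le (hy x hx)
  add_mem' u hu v hv x hx := by
    rw [inner_add_right]
    exact add_nonneg (hu x hx) (hv x hx)

theorem mem_innerDualCone {E : Type*} [NormedAddCommGroup E] [InnerProductSpace ℝ E]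
    (y : E) (s : Set E) : y ∈ s.innerDualCone ↔ ∀ x ∈ s, 0 ≤ ⟪x, y⟫ := Iff.rfl

theorem ConvexCone.innerDualCone_of_innerDualCone_eq_self {E : Type*} [NormedAddCommGroup E]
    [InnerProductSpace ℝ E] [CompleteSpace E] (K : ConvexCone ℝ E)
    (ne : (K : Set E).Nonempty) (hc : IsClosed (K : Set E)) :
    ((K : Set E).innerDualCone : Set E).innerDualCone = K := by
  have h0 : (0 : E) ∈ K := by
    obtain ⟨x, hx⟩ := ne
    have ht : Filter.Tendsto (fun n : ℕ => (1 / ((n : ℝ) + 1)) • x) Filter.atTop (nhds 0) := by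
      have h1 : Filter.Tendsto (fun n : ℕ => 1 / ((n : ℝ) + 1)) Filter.atTop (nhds 0) :=
        tendsto_one_div_add_atTop_nhds_zero_nat
      have := h1.smul_const x
      simpa using this
    exact hc.mem_of_tendsto ht (Filter.Eventually.of_forall fun n =>
      K.smul_mem (by positivity) hx)
  let P : ProperCone ℝ E :=
    { carrier := K
      add_mem' := fun ha hb => K.add_mem ha hb
      zero_mem' := h0
      smul_mem' := fun c x hx => by
        rcases c.2.eq_or_lt with h | h
        · have : c = 0 := Subtype.ext h.symm
          subst this
          simpa using h0
        · exact K.smul_mem h hx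
      isClosed' := hc }
  have hP : (P : Set E) = K := rfl
  ext x
  constructor
  · intro hx
    by_contra hxK
    obtain ⟨y, hy, hxy⟩ := P.hyperplane_separation' (x₀ := x) hxK
    exact absurd (hx y hy) (not_le.2 (by rw [real_inner_comm]; exact hxy))
  · intro hx y hy
    rw [real_inner_comm]
    exact hy x hx

/-- **Dual cone of a decreasing intersection of cones.**
For a decreasing sequence `(K_n)_{n ≥ 1}` of closed convex cones in a
finite-dimensional real inner product space,
`(⋂_n K_n)* = cl(⋃_n K_n*)`. -/
theorem dualCone_iInter_eq_closure_iUnion_dualCone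
    (V : Type) [NormedAddCommGroup V] [InnerProductSpace ℝ V]
    [FiniteDimensional ℝ V] (K : ℕ → Set V)
    (hzero : ∀ n, 1 ≤ n → (0 : V) ∈ K n)
    (hadd : ∀ n, 1 ≤ n → ∀ x ∈ K n, ∀ y ∈ K n, x + y ∈ K n)
    (hsmul : ∀ n, 1 ≤ n → ∀ c : ℝ, 0 ≤ c → ∀ x ∈ K n, c • x ∈ K n)
    (hclosed : ∀ n, 1 ≤ n → IsClosed (K n))
    (hmono : ∀ n, 1 ≤ n → K (n + 1) ⊆ K n) :
    {y : V | ∀ x ∈ ⋂ n : ℕ, ⋂ _ : 1 ≤ n, K n, 0 ≤ ⟪x, y⟫}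
      = closure (⋃ n : ℕ, ⋃ _ : 1 ≤ n, {y : V | ∀ x ∈ K n, 0 ≤ ⟪x, y⟫}) := by
  -- antitonicity for indices ≥ 1
  have hanti : ∀ m n : ℕ, 1 ≤ m → m ≤ n → K n ⊆ K m := by
    intro m n hm hmn
    induction n, hmn using Nat.le_induction with
    | base => exact subset_rfl
    | succ k hk ih => exact fun x hx => ih (hmono k (le_trans hm hk) hx)
  -- the cones Kₙ as `ConvexCone`s
  have hCn : ∀ n : ℕ, 1 ≤ n → ∃ C : ConvexCone ℝ V, (C : Set V) = K n := by
    intro n hn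
    refine ⟨⟨K n, fun c hc x hx => hsmul n hn c hc.le x hx,
      fun x hx y hy => hadd n hn x hx y hy⟩, rfl⟩
  -- the union of the dual cones
  set S : Set V := ⋃ n : ℕ, ⋃ _ : 1 ≤ n, {y : V | ∀ x ∈ K n, 0 ≤ ⟪x, y⟫} with hS
  have hSdesc : S = ⋃ n : ℕ, ⋃ _ : 1 ≤ n, ((K n).innerDualCone : Set V) := rfl
  -- S is a convex cone
  have hdual_mono : ∀ a b : ℕ, 1 ≤ a → a ≤ b →
      ((K a).innerDualCone : Set V) ⊆ ((K b).innerDualCone : Set V) :=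
    fun a b ha hab y hy x hx => hy x (hanti a b ha hab hx)
  let C : ConvexCone ℝ V :=
    { carrier := S
      smul_mem' := by
        rintro c hc x hx
        rw [hSdesc, Set.mem_iUnion₂] at hx ⊢
        obtain ⟨n, hn, hx⟩ := hx
        exact ⟨n, hn, (K n).innerDualCone.smul_mem hc hx⟩
      add_mem' := by
        rintro x hx y hy
        rw [hSdesc, Set.mem_iUnion₂] at hx hy ⊢
        obtain ⟨a, ha, hx⟩ := hx
        obtain ⟨b, hb, hy⟩ := hy
        refine ⟨max a b, le_trans ha (le_max_left a b), ?_⟩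
        exact (K (max a b)).innerDualCone.add_mem
          (hdual_mono a (max a b) ha (le_max_left a b) hx)
          (hdual_mono b (max a b) hb (le_max_right a b) hy) }
  have hCS : (C : Set V) = S := rfl
  -- dual of S equals the intersection of the Kₙ
  have hdualS : ((S.innerDualCone : Set V)) = ⋂ n : ℕ, ⋂ _ : 1 ≤ n, K n := by
    ext y
    simp only [SetLike.mem_coe, mem_innerDualCone, Set.mem_iInter]
    constructor
    · intro h n hn
      obtain ⟨Cn, hCn'⟩ := hCn n hn
      have hbid := Cn.innerDualCone_of_innerDualCone_eq_self
        (⟨0, by rw [hCn']; exact hzero n hn⟩) (by rw [hCn']; exact hclosed n hn)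
      rw [hCn'] at hbid
      rw [← hCn', ← hbid]
      intro x hx
      exact h x (by rw [hSdesc, Set.mem_iUnion₂]; exact ⟨n, hn, hx⟩)
    · intro h x hx
      rw [hSdesc, Set.mem_iUnion₂] at hx
      obtain ⟨n, hn, hx⟩ := hx
      have := hx y (h n hn)
      rwa [real_inner_comm]
  -- dual of closure S equals dual of S
  have hdualcl : ((closure S).innerDualCone : Set V) = (S.innerDualCone : Set V) := by
    apply Set.Subset.antisymm
    · intro y hy x hx
      exact hy x (subset_closure hx)
    · intro y hy
      rw [SetLike.mem_coe, mem_innerDualCone] at hy ⊢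
      intro x hx
      have hcl : IsClosed {x : V | 0 ≤ ⟪x, y⟫} :=
        isClosed_le continuous_const (continuous_id.inner continuous_const)
      exact hcl.closure_subset_iff.2 hy hx
  -- biduality for the closure of S
  have hDne : ((C.closure : ConvexCone ℝ V) : Set V).Nonempty := by
    refine ⟨0, subset_closure ?_⟩
    exact Set.mem_iUnion₂.2 ⟨1, le_refl 1, fun x _ => by rw [inner_zero_right]⟩
  have hDcl : IsClosed ((C.closure : ConvexCone ℝ V) : Set V) := by
    rw [C.coe_closure]; exact isClosed_closure
  have hbidD := C.closure.innerDualCone_of_innerDualCone_eq_self hDne hDcl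
  rw [C.coe_closure, hCS, hdualcl, hdualS] at hbidD
  calc {y : V | ∀ x ∈ ⋂ n : ℕ, ⋂ _ : 1 ≤ n, K n, 0 ≤ ⟪x, y⟫}
      = (((⋂ n : ℕ, ⋂ _ : 1 ≤ n, K n).innerDualCone : Set V)) := rfl
    _ = ((C.closure : ConvexCone ℝ V) : Set V) := by rw [hbidD]
    _ = closure S := by rw [C.coe_closure, hCS]
end
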